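/- For all y₁, y₂, y₃ ∈ ℝ, the determinant of the Hessian of A(y) = (y₁⁴+y₂⁴+y₃⁴) + 2(y₁³y₂+y₁³y₃+y₂³y₁+y₂³y₃+y₃³y₁+y₃³y₂) + 3(y₁²y₂²+y₁²y₃²+y₂²y₃²) + 4(y₁²y₂y₃+y₁y₂²y₃+y₁y₂y₃²) equals 96(y₁² + y₂² + y₃² + y₁y₂ + y₁y₃ + y₂y₃)³. -/

import Mathlib

noncomputable def qd1 (f : ℝ → ℝ → ℝ → ℝ) : ℝ → ℝ → ℝ → ℝ :=
  fun x y z => deriv (fun t => f t y z) x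
noncomputable def qd2 (f : ℝ → ℝ → ℝ → ℝ) : ℝ → ℝ → ℝ → ℝ :=
  fun x y z => deriv (fun t => f x t z) y
noncomputable def qd3 (f : ℝ → ℝ → ℝ → ℝ) : ℝ → ℝ → ℝ → ℝ :=
  fun x y z => deriv (fun t => f x y t) z

lemma dq (a b c d e x : ℝ) (f : ℝ → ℝ)
    (hf : ∀ t, f t = a*t^4+b*t^3+c*t^2+d*t+e) :
    deriv f x = 4*a*x^3+3*b*x^2+2*c*x+d := by
  have hfe : f = fun t => a*t^4+b*t^3+c*t^2+d*t+e := funext hf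
  subst hfe
  have h := (((hasDerivAt_pow 4 x).const_mul a).add
      (((hasDerivAt_pow 3 x).const_mul b).add
      (((hasDerivAt_pow 2 x).const_mul c).add
      (((hasDerivAt_id x).const_mul d).add_const e))))
  have h2 : HasDerivAt (fun t : ℝ => a*t^4+b*t^3+c*t^2+d*t+e)
      (4*a*x^3+3*b*x^2+2*c*x+d) x := by
    convert h using 1
    · rfl
    · rfl
    · funext t; simp [id]; ring
    · norm_num; ring
  exact h2.deriv

/-- The common form of the first partial derivatives of A. -/
noncomputable def Dp : ℝ → ℝ → ℝ → ℝ := fun x y z =>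
  4*x^3+6*x^2*y+6*x^2*z+2*y^3+2*z^3+6*x*y^2+6*x*z^2+8*x*y*z+4*y^2*z+4*y*z^2

lemma dA1 (y z x : ℝ) :
    deriv (fun t => (t ^ 4 + y ^ 4 + z ^ 4) +
        2 * (t ^ 3 * y + t ^ 3 * z + y ^ 3 * t + y ^ 3 * z + z ^ 3 * t + z ^ 3 * y) +
        3 * (t ^ 2 * y ^ 2 + t ^ 2 * z ^ 2 + y ^ 2 * z ^ 2) +
        4 * (t ^ 2 * y * z + t * y ^ 2 * z + t * y * z ^ 2)) x = Dp x y z := by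
  rw [dq 1 (2*(y+z)) (3*y^2+3*z^2+4*y*z) (2*y^3+2*z^3+4*y^2*z+4*y*z^2)
    (y^4+z^4+2*y^3*z+2*y*z^3+3*y^2*z^2) x _ (fun t => by ring)]
  simp only [Dp]; ring

lemma dA2 (x z y : ℝ) :
    deriv (fun t => (x ^ 4 + t ^ 4 + z ^ 4) +
        2 * (x ^ 3 * t + x ^ 3 * z + t ^ 3 * x + t ^ 3 * z + z ^ 3 * x + z ^ 3 * t) +
        3 * (x ^ 2 * t ^ 2 + x ^ 2 * z ^ 2 + t ^ 2 * z ^ 2) +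
        4 * (x ^ 2 * t * z + x * t ^ 2 * z + x * t * z ^ 2)) y = Dp y x z := by
  rw [dq 1 (2*(x+z)) (3*x^2+3*z^2+4*x*z) (2*x^3+2*z^3+4*x^2*z+4*x*z^2)
    (x^4+z^4+2*x^3*z+2*x*z^3+3*x^2*z^2) y _ (fun t => by ring)]
  simp only [Dp]; ring

lemma dA3 (x y z : ℝ) :
    deriv (fun t => (x ^ 4 + y ^ 4 + t ^ 4) +
        2 * (x ^ 3 * y + x ^ 3 * t + y ^ 3 * x + y ^ 3 * t + t ^ 3 * x + t ^ 3 * y) +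
        3 * (x ^ 2 * y ^ 2 + x ^ 2 * t ^ 2 + y ^ 2 * t ^ 2) +
        4 * (x ^ 2 * y * t + x * y ^ 2 * t + x * y * t ^ 2)) z = Dp z x y := by
  rw [dq 1 (2*(x+y)) (3*x^2+3*y^2+4*x*y) (2*x^3+2*y^3+4*x^2*y+4*x*y^2)
    (x^4+y^4+2*x^3*y+2*x*y^3+3*x^2*y^2) z _ (fun t => by ring)]
  simp only [Dp]; ring

lemma dD1 (y z x : ℝ) :
    deriv (fun t => Dp t y z) x = 12*x^2+12*x*y+12*x*z+6*y^2+6*z^2+8*y*z := by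
  rw [dq 0 4 (6*(y+z)) (6*y^2+6*z^2+8*y*z) (2*y^3+2*z^3+4*y^2*z+4*y*z^2) x _
    (fun t => by simp only [Dp]; ring)]
  ring

lemma dD2 (x z y : ℝ) :
    deriv (fun t => Dp x t z) y = 6*x^2+6*y^2+12*x*y+8*x*z+8*y*z+4*z^2 := by
  rw [dq 0 2 (6*x+4*z) (6*x^2+8*x*z+4*z^2) (4*x^3+6*z*x^2+6*z^2*x+2*z^3) y _
    (fun t => by simp only [Dp]; ring)]
  ring

lemma dD3 (x y z : ℝ) :
    deriv (fun t => Dp x y t) z = 6*x^2+6*z^2+12*x*z+8*x*y+8*y*z+4*y^2 := by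
  rw [dq 0 2 (6*x+4*y) (6*x^2+8*x*y+4*y^2) (4*x^3+6*y*x^2+6*y^2*x+2*y^3) z _
    (fun t => by simp only [Dp]; ring)]
  ring

theorem stmt_18 (A : ℝ → ℝ → ℝ → ℝ)
    (hA : A = fun y₁ y₂ y₃ =>
      (y₁ ^ 4 + y₂ ^ 4 + y₃ ^ 4) +
        2 * (y₁ ^ 3 * y₂ + y₁ ^ 3 * y₃ + y₂ ^ 3 * y₁ + y₂ ^ 3 * y₃ + y₃ ^ 3 * y₁ + y₃ ^ 3 * y₂) +
        3 * (y₁ ^ 2 * y₂ ^ 2 + y₁ ^ 2 * y₃ ^ 2 + y₂ ^ 2 * y₃ ^ 2) +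
        4 * (y₁ ^ 2 * y₂ * y₃ + y₁ * y₂ ^ 2 * y₃ + y₁ * y₂ * y₃ ^ 2)) :
    ∀ y₁ y₂ y₃ : ℝ,
      (!![qd1 (qd1 A) y₁ y₂ y₃, qd1 (qd2 A) y₁ y₂ y₃, qd1 (qd3 A) y₁ y₂ y₃;
          qd2 (qd1 A) y₁ y₂ y₃, qd2 (qd2 A) y₁ y₂ y₃, qd2 (qd3 A) y₁ y₂ y₃;
          qd3 (qd1 A) y₁ y₂ y₃, qd3 (qd2 A) y₁ y₂ y₃, qd3 (qd3 A) y₁ y₂ y₃] :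
          Matrix (Fin 3) (Fin 3) ℝ).det =
        96 * (y₁ ^ 2 + y₂ ^ 2 + y₃ ^ 2 + y₁ * y₂ + y₁ * y₃ + y₂ * y₃) ^ 3 := by
  subst hA
  intro y₁ y₂ y₃
  simp only [qd1, qd2, qd3]
  simp only [dA1, dA2, dA3]
  simp only [dD1, dD2, dD3]
  simp [Matrix.det_fin_three]
  ring
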